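/- For each λ ∈ {0,1,2,3} and 0 < V ≤ 1/√2, there exists a qubit pure state |ψ_λ⟩ ∈ ℂ² such that measuring the two mutually unbiased projective observables B₀ = σ_z and B₁ = σ_x on |ψ_λ⟩ reproduces the distributions P(b|y,ρ_λ) of the dimension-4 LHV-LHS decomposition of the white noise-BB84 box; in particular for λ=0 one may take |ψ₀⟩ = √((1+V)/2)|0⟩ + e^{iφ₀}√((1-V)/2)|1⟩ with cos φ₀ = -V/√(1-V²), which requires V ≤ 1/√2. -/

import Mathlib

open Finset Complex

/-- Bob's local-hidden-state response distributions P(b|y,ρ_λ) of the dimension-4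
LHV-LHS decomposition of the white noise-BB84 box. -/
noncomputable def PBob (V : ℝ) : Fin 4 → Fin 2 → Fin 2 → ℝ :=
  ![fun y b => if y = b then (1 + V) / 2 else (1 - V) / 2,
    fun y b => if y = b then (1 - V) / 2 else (1 + V) / 2,
    fun _ b => if b = 0 then (1 + V) / 2 else (1 - V) / 2,
    fun _ b => if b = 0 then (1 - V) / 2 else (1 + V) / 2]

/-- Born probabilities for outcome `b` (eigenvalue (-1)^b) of the mutually unbiased
qubit measurements B₀ = σ_z (y = 0) and B₁ = σ_x (y = 1) on the pure state ψ. -/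
noncomputable def born (ψ : Fin 2 → ℂ) (y b : Fin 2) : ℝ :=
  if y = 0 then ‖ψ b‖ ^ 2 else ‖ψ 0 + (-1 : ℂ) ^ (b : ℕ) * ψ 1‖ ^ 2 / 2

lemma norm_mix (s t φ : ℝ) (hs : 0 ≤ s) (ht : 0 ≤ t) :
    ‖((Real.sqrt s : ℝ) : ℂ) + Complex.exp (φ * Complex.I) * ((Real.sqrt t : ℝ) : ℂ)‖ ^ 2
      = s + t + 2 * Real.sqrt s * Real.sqrt t * Real.cos φ := by
  rw [Complex.sq_norm, Complex.normSq_apply]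
  simp [Complex.add_re, Complex.add_im, Complex.mul_re, Complex.mul_im]
  nlinarith [Real.sq_sqrt hs, Real.sq_sqrt ht, Real.sin_sq_add_cos_sq φ]

lemma born_eval (s t φ : ℝ) (hs : 0 ≤ s) (ht : 0 ≤ t) :
    born ![((Real.sqrt s : ℝ) : ℂ), Complex.exp (φ * Complex.I) * ((Real.sqrt t : ℝ) : ℂ)] 0 0 = s ∧
    born ![((Real.sqrt s : ℝ) : ℂ), Complex.exp (φ * Complex.I) * ((Real.sqrt t : ℝ) : ℂ)] 0 1 = t ∧
    born ![((Real.sqrt s : ℝ) : ℂ), Complex.exp (φ * Complex.I) * ((Real.sqrt t : ℝ) : ℂ)] 1 0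
      = (s + t + 2 * Real.sqrt s * Real.sqrt t * Real.cos φ) / 2 ∧
    born ![((Real.sqrt s : ℝ) : ℂ), Complex.exp (φ * Complex.I) * ((Real.sqrt t : ℝ) : ℂ)] 1 1
      = (s + t - 2 * Real.sqrt s * Real.sqrt t * Real.cos φ) / 2 := by
  have hminus : ((Real.sqrt s : ℝ) : ℂ) - Complex.exp (φ * Complex.I) * ((Real.sqrt t : ℝ) : ℂ)
      = ((Real.sqrt s : ℝ) : ℂ) + Complex.exp ((φ + Real.pi : ℝ) * Complex.I) * ((Real.sqrt t : ℝ) : ℂ) := by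
    push_cast
    rw [add_mul, Complex.exp_add, Complex.exp_pi_mul_I]
    ring
  refine ⟨?_, ?_, ?_, ?_⟩
  · simp [born, Real.sq_sqrt hs]
  · simp [born, Real.sq_sqrt ht, norm_pow, mul_pow]
  · simp only [born, if_neg (by decide : (1 : Fin 2) ≠ 0), Matrix.cons_val_zero,
      Matrix.cons_val_one, Matrix.head_cons, Fin.val_zero, pow_zero, one_mul]
    rw [norm_mix s t φ hs ht]
  · simp only [born, if_neg (by decide : (1 : Fin 2) ≠ 0), Matrix.cons_val_zero,
      Matrix.cons_val_one, Matrix.head_cons, Fin.val_one, pow_one, neg_one_mul,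
      ← sub_eq_add_neg]
    rw [hminus, norm_mix s t (φ + Real.pi) hs ht, Real.cos_add_pi]
    ring

lemma norm_state (s t φ : ℝ) (hs : 0 ≤ s) (ht : 0 ≤ t) :
    ‖(![((Real.sqrt s : ℝ) : ℂ), Complex.exp (φ * Complex.I) * ((Real.sqrt t : ℝ) : ℂ)]) 0‖ ^ 2
      + ‖(![((Real.sqrt s : ℝ) : ℂ), Complex.exp (φ * Complex.I) * ((Real.sqrt t : ℝ) : ℂ)]) 1‖ ^ 2
      = s + t := by
  simp [Real.sq_sqrt hs, Real.sq_sqrt ht, mul_pow, norm_pow]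

/-- For each λ and 0 < V ≤ 1/√2 there is a qubit pure state reproducing P(b|y,ρ_λ)
under the two mutually unbiased measurements σ_z, σ_x; in particular for λ = 0
the state √((1+V)/2)|0⟩ + e^{iφ₀}√((1-V)/2)|1⟩ with cos φ₀ = -V/√(1-V²) works. -/
theorem bb84_LHS_qubit_realization (V : ℝ) (hV0 : 0 < V) (hV1 : V ≤ (Real.sqrt 2)⁻¹) :
    (∀ lam : Fin 4, ∃ ψ : Fin 2 → ℂ, ‖ψ 0‖ ^ 2 + ‖ψ 1‖ ^ 2 = 1 ∧
        ∀ y b : Fin 2, born ψ y b = PBob V lam y b) ∧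
    (∀ φ : ℝ, Real.cos φ = -V / Real.sqrt (1 - V ^ 2) →
      ∀ y b : Fin 2,
        born (![((Real.sqrt ((1 + V) / 2) : ℝ) : ℂ),
                Complex.exp (φ * Complex.I) * ((Real.sqrt ((1 - V) / 2) : ℝ) : ℂ)]) y b
          = PBob V 0 y b) := by
  have h2 : ((Real.sqrt 2)⁻¹) ^ 2 = (2 : ℝ)⁻¹ := by
    rw [inv_pow, Real.sq_sqrt (by norm_num : (0:ℝ) ≤ 2)]
  have hinv : (0:ℝ) < (Real.sqrt 2)⁻¹ := by positivity
  have hVsq : V ^ 2 ≤ 1 / 2 := by nlinarith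
  have hVlt : V < 1 := by nlinarith
  have hs0 : (0:ℝ) ≤ (1 + V) / 2 := by linarith
  have ht0 : (0:ℝ) ≤ (1 - V) / 2 := by linarith
  have h1V : (0:ℝ) < 1 - V ^ 2 := by nlinarith
  have hsq : 0 < Real.sqrt (1 - V ^ 2) := Real.sqrt_pos.2 h1V
  have hVle : V ≤ Real.sqrt (1 - V ^ 2) := by
    nlinarith [Real.sq_sqrt h1V.le, hsq]
  have hc1 : V / Real.sqrt (1 - V ^ 2) ≤ 1 := (div_le_one hsq).2 hVle
  have hc0 : 0 ≤ V / Real.sqrt (1 - V ^ 2) := by positivity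
  have hprod2 : ∀ a b : ℝ, a * b = (1 - V ^ 2) / 4 → 0 ≤ a →
      2 * Real.sqrt a * Real.sqrt b = Real.sqrt (1 - V ^ 2) := by
    intro a b hab ha
    rw [mul_assoc, ← Real.sqrt_mul ha, hab, Real.sqrt_div h1V.le,
      show Real.sqrt 4 = 2 by rw [show (4:ℝ) = 2 ^ 2 by norm_num, Real.sqrt_sq (by norm_num : (0:ℝ) ≤ 2)]]
    field_simp
  have hprodA : 2 * Real.sqrt ((1 + V) / 2) * Real.sqrt ((1 - V) / 2) = Real.sqrt (1 - V ^ 2) :=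
    hprod2 _ _ (by ring) hs0
  have hprodB : 2 * Real.sqrt ((1 - V) / 2) * Real.sqrt ((1 + V) / 2) = Real.sqrt (1 - V ^ 2) :=
    hprod2 _ _ (by ring) ht0
  have hkey : ∀ c : ℝ, Real.sqrt (1 - V ^ 2) * (c / Real.sqrt (1 - V ^ 2)) = c := by
    intro c; field_simp
  -- the λ = 0 (and second-part) case
  have case0 : ∀ φ : ℝ, Real.cos φ = -V / Real.sqrt (1 - V ^ 2) →
      ∀ y b : Fin 2,
        born (![((Real.sqrt ((1 + V) / 2) : ℝ) : ℂ),
                Complex.exp (φ * Complex.I) * ((Real.sqrt ((1 - V) / 2) : ℝ) : ℂ)]) y b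
          = PBob V 0 y b := by
    intro φ hφ y b
    obtain ⟨e1, e2, e3, e4⟩ := born_eval ((1 + V) / 2) ((1 - V) / 2) φ hs0 ht0
    fin_cases y <;> fin_cases b <;> simp only [Fin.mk_zero, Fin.mk_one]
    · rw [e1]; simp [PBob]; try ring
    · rw [e2]; simp [PBob]; try ring
    · rw [e3, hprodA, hφ, hkey]; simp [PBob]; try ring
    · rw [e4, hprodA, hφ, hkey]; simp [PBob]; try ring
  constructor
  · intro lam
    fin_cases lam
    · refine ⟨![((Real.sqrt ((1 + V) / 2) : ℝ) : ℂ),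
        Complex.exp ((Real.arccos (-V / Real.sqrt (1 - V ^ 2)) : ℝ) * Complex.I)
          * ((Real.sqrt ((1 - V) / 2) : ℝ) : ℂ)], ?_, ?_⟩
      · rw [norm_state _ _ _ hs0 ht0]; ring
      · exact case0 _ (Real.cos_arccos (by rw [neg_div]; linarith) (by rw [neg_div]; linarith))
    · refine ⟨![((Real.sqrt ((1 - V) / 2) : ℝ) : ℂ),
        Complex.exp ((Real.arccos (V / Real.sqrt (1 - V ^ 2)) : ℝ) * Complex.I)
          * ((Real.sqrt ((1 + V) / 2) : ℝ) : ℂ)], ?_, ?_⟩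
      · rw [norm_state _ _ _ ht0 hs0]; ring
      · intro y b
        obtain ⟨e1, e2, e3, e4⟩ := born_eval ((1 - V) / 2) ((1 + V) / 2) (Real.arccos (V / Real.sqrt (1 - V ^ 2))) ht0 hs0
        have hφ := Real.cos_arccos (by linarith) hc1
        fin_cases y <;> fin_cases b <;> simp only [Fin.mk_zero, Fin.mk_one]
        · rw [e1]; simp [PBob]; try ring
        · rw [e2]; simp [PBob]; try ring
        · rw [e3, hprodB, hφ, hkey]; simp [PBob]; try ring
        · rw [e4, hprodB, hφ, hkey]; simp [PBob]; try ring
    · refine ⟨![((Real.sqrt ((1 + V) / 2) : ℝ) : ℂ),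
        Complex.exp ((Real.arccos (V / Real.sqrt (1 - V ^ 2)) : ℝ) * Complex.I)
          * ((Real.sqrt ((1 - V) / 2) : ℝ) : ℂ)], ?_, ?_⟩
      · rw [norm_state _ _ _ hs0 ht0]; ring
      · intro y b
        obtain ⟨e1, e2, e3, e4⟩ := born_eval ((1 + V) / 2) ((1 - V) / 2) (Real.arccos (V / Real.sqrt (1 - V ^ 2))) hs0 ht0
        have hφ := Real.cos_arccos (by linarith) hc1
        fin_cases y <;> fin_cases b <;> simp only [Fin.mk_zero, Fin.mk_one]
        · rw [e1]; simp [PBob]; try ring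
        · rw [e2]; simp [PBob]; try ring
        · rw [e3, hprodA, hφ, hkey]; simp [PBob]; try ring
        · rw [e4, hprodA, hφ, hkey]; simp [PBob]; try ring
    · refine ⟨![((Real.sqrt ((1 - V) / 2) : ℝ) : ℂ),
        Complex.exp ((Real.arccos (-V / Real.sqrt (1 - V ^ 2)) : ℝ) * Complex.I)
          * ((Real.sqrt ((1 + V) / 2) : ℝ) : ℂ)], ?_, ?_⟩
      · rw [norm_state _ _ _ ht0 hs0]; ring
      · intro y b
        obtain ⟨e1, e2, e3, e4⟩ :=
          born_eval ((1 - V) / 2) ((1 + V) / 2) (Real.arccos (-V / Real.sqrt (1 - V ^ 2))) ht0 hs0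
        have hφ : Real.cos (Real.arccos (-V / Real.sqrt (1 - V ^ 2))) = -V / Real.sqrt (1 - V ^ 2) :=
          Real.cos_arccos (by rw [neg_div]; linarith) (by rw [neg_div]; linarith)
        fin_cases y <;> fin_cases b <;> simp only [Fin.mk_zero, Fin.mk_one]
        · rw [e1]; simp [PBob]; try ring
        · rw [e2]; simp [PBob]; try ring
        · rw [e3, hprodB, hφ, hkey]; simp [PBob]; try ring
        · rw [e4, hprodB, hφ, hkey]; simp [PBob]; try ring
  · exact case0
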